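/- Let W be an N×N discrete matrix weight with monic orthogonal sequence (P_n) and squared norms H_n, and assume P_n(0) is invertible for all n ∈ ℕ₀. Let (Q_x)_{x≥0} be monic matrix polynomials with deg Q_x = x, let ρ : ℕ₀ → M_N(ℂ), and let Υ(x) ∈ M_N(ℂ) be invertible for each x ∈ ℕ₀, such that the duality P_n(x) = P_n(0)·Q_x⟦ρ(n)⟧·Υ(x) holds for all n, x ∈ ℕ₀. Set U(n) = P_n(0)^* H_n^{−1} P_n(0). Assume that for all x, y ∈ ℕ₀ the series ∑_{n=0}^∞ Q_x⟦ρ(n)⟧^* U(n) Q_y⟦ρ(n)⟧ converges entrywise absolutely, and that for all x, y ∈ ℕ₀ both lim_{n→∞} Q_x⟦ρ(n+1)⟧^* P_{n+1}(0)^* H_n^{−1} P_n(0) Q_y⟦ρ(n)⟧ = 0 and lim_{n→∞} Q_x⟦ρ(n)⟧^* P_n(0)^* H_n^{−1} P_{n+1}(0) Q_y⟦ρ(n+1)⟧ = 0. Then the dual family satisfies the orthogonality relations: for all x, y ∈ ℕ₀ with x ≠ y, ∑_{n=0}^∞ Q_x⟦ρ(n)⟧^* U(n) Q_y⟦ρ(n)⟧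 = 0. -/

import Mathlib

open scoped BigOperators ComplexOrder
open Matrix Polynomial Filter

noncomputable section

/-- The space of `N × N` complex matrices. -/
abbrev Mat (N : ℕ) := Matrix (Fin N) (Fin N) ℂ

/-- Evaluation of a matrix polynomial at a (scalar) complex number. -/
def matEval {N : ℕ} (P : Polynomial (Mat N)) (z : ℂ) : Mat N :=
  P.eval (z • (1 : Mat N))

/-- Matrix-valued inner product associated to a discrete matrix weight:
`⟨P,Q⟩_W = ∑_{x=0}^∞ P(x) W(x) Q(x)^*`. -/
def innerW {N : ℕ} (W : ℤ → Mat N) (P Q : Polynomial (Mat N)) : Mat N :=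
  ∑' x : ℕ, matEval P x * W x * (matEval Q x)ᴴ

/-- `W : ℤ → M_N(ℂ)` is an `N × N` discrete matrix weight: positive definite on ℕ,
zero on negative integers, with entrywise absolutely convergent moments of all orders. -/
structure IsWeight {N : ℕ} (W : ℤ → Mat N) : Prop where
  posDef : ∀ x : ℕ, (W (x : ℤ)).PosDef
  neg : ∀ x : ℤ, x < 0 → W x = 0
  moments : ∀ k : ℕ, ∀ i j : Fin N, Summable fun x : ℕ => (x : ℝ) ^ k * ‖W (x : ℤ) i j‖

/-- `P` is the monic orthogonal sequence of the discrete matrix weight `W`. -/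
structure IsMOS {N : ℕ} (W : ℤ → Mat N) (P : ℕ → Polynomial (Mat N)) : Prop where
  monic : ∀ n, (P n).Monic
  deg : ∀ n, (P n).natDegree = n
  orth : ∀ m n, m ≠ n → innerW W (P m) (P n) = 0

/-- Left evaluation `Q⟦M⟧ = ∑_k M^k * A_k` of a matrix polynomial at a matrix. -/
def leftEval {N : ℕ} (Q : Polynomial (Mat N)) (M : Mat N) : Mat N :=
  Q.sum fun k a => M ^ k * a

/-- The block Vandermonde condition for an eigenvalue function `ρ`. -/
def BlockVdm {N : ℕ} (ρ : ℕ → Mat N) : Prop :=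
  ∀ x : ℕ, ∃ k : Fin (x + 1) → ℕ,
    IsUnit (Matrix.of fun p q : Fin (x + 1) × Fin N => (ρ (k p.1) ^ (q.1 : ℕ)) p.2 q.2)

/-- The backward difference operator `(G·∇)(x) = G(x) - G(x-1)`. -/
def nabla {N : ℕ} (G : ℤ → Mat N) : ℤ → Mat N := fun x => G x - G (x - 1)

namespace DO
variable {N : ℕ}

lemma matEval_apply (p : Polynomial (Mat N)) (z : ℂ) (i j : Fin N) :
    matEval p z i j = ∑ k ∈ Finset.range (p.natDegree + 1), p.coeff k i j * z ^ k := by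
  rw [matEval, Polynomial.eval_eq_sum_range, Matrix.sum_apply]
  refine Finset.sum_congr rfl fun k _ => ?_
  rw [_root_.smul_pow, one_pow, mul_smul_comm, mul_one]
  simp [mul_comm]

lemma matEval_add (p q : Polynomial (Mat N)) (z : ℂ) :
    matEval (p + q) z = matEval p z + matEval q z := by simp [matEval]

lemma matEval_sub (p q : Polynomial (Mat N)) (z : ℂ) :
    matEval (p - q) z = matEval p z - matEval q z := by simp [matEval]

lemma matEval_zero (z : ℂ) : matEval (0 : Polynomial (Mat N)) z = 0 := by simp [matEval]

lemma matEval_C_mul (A : Mat N) (p : Polynomial (Mat N)) (z : ℂ) :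
    matEval (C A * p) z = A * matEval p z := by simp [matEval, eval_C_mul]

lemma matEval_X_mul (p : Polynomial (Mat N)) (z : ℂ) :
    matEval (X * p) z = z • matEval p z := by
  rw [matEval, X_mul, eval_mul_X, mul_smul_comm, mul_one, matEval]

lemma matEval_sum {ι : Type*} (s : Finset ι) (f : ι → Polynomial (Mat N)) (z : ℂ) :
    matEval (∑ k ∈ s, f k) z = ∑ k ∈ s, matEval (f k) z := by
  simp [matEval, Polynomial.eval_finset_sum]

variable {W : ℤ → Mat N}

lemma summable_pow_mul_W (hW : IsWeight W) (m : ℕ) (a b : Fin N) :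
    Summable fun x : ℕ => ((x : ℂ)) ^ m * W (x : ℤ) a b := by
  refine Summable.of_norm ?_
  simpa [norm_mul, norm_pow] using hW.moments m a b

lemma summable_innerW_entry (hW : IsWeight W) (p q : Polynomial (Mat N)) (i j : Fin N) :
    Summable fun x : ℕ => (matEval p x * W x * (matEval q x)ᴴ) i j := by
  have h : ∀ a b : Fin N, Summable fun x : ℕ =>
      matEval p x i a * W (x:ℤ) a b * star (matEval q x j b) := by
    intro a b
    have e : ∀ x : ℕ, matEval p x i a * W (x:ℤ) a b * star (matEval q x j b)
        = ∑ k ∈ Finset.range (p.natDegree+1), ∑ l ∈ Finset.range (q.natDegree+1),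
            (p.coeff k i a * star (q.coeff l j b)) * (((x:ℂ))^(k+l) * W (x:ℤ) a b) := by
      intro x
      rw [matEval_apply, matEval_apply, star_sum, Finset.sum_mul, Finset.sum_mul]
      refine Finset.sum_congr rfl fun k _ => ?_
      rw [Finset.mul_sum]
      refine Finset.sum_congr rfl fun l _ => ?_
      rw [star_mul', star_pow, star_natCast]
      ring
    rw [funext e]
    exact summable_sum fun k _ => summable_sum fun l _ =>
      ((summable_pow_mul_W hW (k+l) a b).mul_left _)
  have h2 : Summable fun x : ℕ => ∑ b : Fin N, ∑ a : Fin N,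
      matEval p x i a * W (x:ℤ) a b * star (matEval q x j b) :=
    summable_sum fun b _ => summable_sum fun a _ => h a b
  refine h2.congr fun x => ?_
  simp [Matrix.mul_apply, Matrix.conjTranspose_apply, Finset.sum_mul]

lemma summable_innerW_term (hW : IsWeight W) (p q : Polynomial (Mat N)) :
    Summable fun x : ℕ => matEval p x * W x * (matEval q x)ᴴ := by
  exact Pi.summable.2 fun i => Pi.summable.2 fun j => summable_innerW_entry hW p q i j


/-- Left multiplication as a continuous linear map. -/
def lmul (A : Mat N) : Mat N →L[ℂ] Mat N :=
  ⟨LinearMap.mulLeft ℂ A, continuous_const.mul continuous_id⟩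

@[simp] lemma lmul_apply (A M : Mat N) : lmul A M = A * M := rfl

/-- Right multiplication as a continuous linear map. -/
def rmul (A : Mat N) : Mat N →L[ℂ] Mat N :=
  ⟨LinearMap.mulRight ℂ A, continuous_id.mul continuous_const⟩

@[simp] lemma rmul_apply (A M : Mat N) : rmul A M = M * A := rfl

/-- Conjugate transpose as a continuous real-linear map. -/
def ctCLM : Mat N →L[ℝ] Mat N where
  toFun M := Mᴴ
  map_add' A B := Matrix.conjTranspose_add A B
  map_smul' r M := by
    ext i j
    simp [Matrix.conjTranspose_apply, star_smul]
  cont := by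
    show Continuous fun M : Mat N => Mᴴ
    exact continuous_id.matrix_conjTranspose

@[simp] lemma ctCLM_apply (M : Mat N) : (ctCLM M : Mat N) = Mᴴ := rfl

/-- Quadratic form `M ↦ star v ⬝ᵥ M *ᵥ v` as a continuous linear map. -/
def qf (v : Fin N → ℂ) : Mat N →L[ℂ] ℂ where
  toFun M := star v ⬝ᵥ M *ᵥ v
  map_add' A B := by simp [Matrix.add_mulVec, dotProduct_add]
  map_smul' c M := by simp [Matrix.smul_mulVec, dotProduct_smul]
  cont := by
    show Continuous fun M : Mat N => star v ⬝ᵥ M *ᵥ v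
    have : (fun M : Mat N => star v ⬝ᵥ M *ᵥ v)
        = fun M : Mat N => ∑ i : Fin N, star (v i) * ∑ j : Fin N, M i j * v j := by
      funext M
      simp [dotProduct, Matrix.mulVec, Pi.star_apply]
    rw [this]
    refine continuous_finset_sum _ fun i _ => Continuous.mul continuous_const ?_
    refine continuous_finset_sum _ fun j _ => Continuous.mul ?_ continuous_const
    exact (continuous_apply j).comp (continuous_apply i)

@[simp] lemma qf_apply (v : Fin N → ℂ) (M : Mat N) : qf v M = star v ⬝ᵥ M *ᵥ v := rfl

lemma innerW_add_left (hW : IsWeight W) (p₁ p₂ q : Polynomial (Mat N)) :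
    innerW W (p₁ + p₂) q = innerW W p₁ q + innerW W p₂ q := by
  unfold innerW
  rw [← Summable.tsum_add (summable_innerW_term hW p₁ q) (summable_innerW_term hW p₂ q)]
  exact tsum_congr fun x => by rw [matEval_add, add_mul, add_mul]

lemma innerW_sub_left (hW : IsWeight W) (p₁ p₂ q : Polynomial (Mat N)) :
    innerW W (p₁ - p₂) q = innerW W p₁ q - innerW W p₂ q := by
  unfold innerW
  rw [← Summable.tsum_sub (summable_innerW_term hW p₁ q) (summable_innerW_term hW p₂ q)]
  exact tsum_congr fun x => by rw [matEval_sub, sub_mul, sub_mul]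

lemma innerW_zero_left (q : Polynomial (Mat N)) : innerW W 0 q = 0 := by
  unfold innerW
  have : ∀ x : ℕ, matEval (0 : Polynomial (Mat N)) x * W x * (matEval q x)ᴴ = 0 := by
    intro x; rw [matEval_zero, zero_mul, zero_mul]
  rw [tsum_congr this, tsum_zero]

lemma innerW_C_mul_left (hW : IsWeight W) (A : Mat N) (p q : Polynomial (Mat N)) :
    innerW W (C A * p) q = A * innerW W p q := by
  unfold innerW
  rw [← lmul_apply, (lmul A).map_tsum (summable_innerW_term hW p q)]
  exact tsum_congr fun x => by rw [lmul_apply, matEval_C_mul]; simp [mul_assoc]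

lemma innerW_conjTranspose (hW : IsWeight W) (p q : Polynomial (Mat N)) :
    (innerW W p q)ᴴ = innerW W q p := by
  unfold innerW
  rw [← ctCLM_apply, ctCLM.map_tsum (summable_innerW_term hW p q)]
  refine tsum_congr fun x => ?_
  rw [ctCLM_apply, Matrix.conjTranspose_mul, Matrix.conjTranspose_mul,
    Matrix.conjTranspose_conjTranspose, (hW.posDef x).1.eq, mul_assoc]

lemma innerW_add_right (hW : IsWeight W) (p q₁ q₂ : Polynomial (Mat N)) :
    innerW W p (q₁ + q₂) = innerW W p q₁ + innerW W p q₂ := by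
  rw [← innerW_conjTranspose hW, innerW_add_left hW, Matrix.conjTranspose_add,
    innerW_conjTranspose hW, innerW_conjTranspose hW]

lemma innerW_X_mul (hW : IsWeight W) (p q : Polynomial (Mat N)) :
    innerW W (X * p) q = innerW W p (X * q) := by
  unfold innerW
  refine tsum_congr fun x => ?_
  rw [matEval_X_mul, matEval_X_mul, Matrix.conjTranspose_smul, star_natCast,
    smul_mul_assoc, smul_mul_assoc, mul_smul_comm]

lemma innerW_sum_left (hW : IsWeight W) {ι : Type*} (s : Finset ι)
    (f : ι → Polynomial (Mat N)) (q : Polynomial (Mat N)) :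
    innerW W (∑ k ∈ s, f k) q = ∑ k ∈ s, innerW W (f k) q := by
  classical
  induction s using Finset.induction_on with
  | empty => simp [innerW_zero_left]
  | @insert a s h ih =>
    rw [Finset.sum_insert h, Finset.sum_insert h, innerW_add_left hW, ih]

/-- Scalar entry polynomial of a matrix polynomial. -/
def ep (p : Polynomial (Mat N)) (i j : Fin N) : Polynomial ℂ :=
  ∑ k ∈ Finset.range (p.natDegree + 1), C (p.coeff k i j) * X ^ k

lemma ep_eval (p : Polynomial (Mat N)) (i j : Fin N) (z : ℂ) :
    (ep p i j).eval z = matEval p z i j := by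
  rw [ep, matEval_apply, Polynomial.eval_finset_sum]
  exact Finset.sum_congr rfl fun k _ => by simp

lemma ep_coeff (p : Polynomial (Mat N)) (i j : Fin N) (m : ℕ)
    (hm : m ≤ p.natDegree) : (ep p i j).coeff m = p.coeff m i j := by
  rw [ep, Polynomial.finset_sum_coeff]
  rw [Finset.sum_eq_single m]
  · simp
  · intro k _ hk
    simp [Polynomial.coeff_C_mul, Polynomial.coeff_X_pow, Ne.symm hk]
  · intro h
    exact absurd (Finset.mem_range.2 (Nat.lt_succ_of_le hm)) h

/-- Nondegeneracy: the squared norm `⟨Pₙ,Pₙ⟩_W` of a monic polynomial is invertible. -/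
lemma isUnit_det_inner (hW : IsWeight W) (p : Polynomial (Mat N)) (hp : p.Monic) :
    IsUnit (innerW W p p).det := by
  by_contra hdet
  have hdet0 : (innerW W p p).det = 0 := by
    simpa [isUnit_iff_ne_zero] using hdet
  obtain ⟨v, hv, hv0⟩ := (Matrix.exists_mulVec_eq_zero_iff).2 hdet0
  -- the scalar series of quadratic forms
  set T := fun x : ℕ => matEval p x * W x * (matEval p x)ᴴ with hT
  have hTsum : Summable T := summable_innerW_term hW p p
  set S := fun x : ℕ => star v ⬝ᵥ T x *ᵥ v with hS
  have hSsum : Summable S := hTsum.map (qf v) (qf v).continuous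
  have hStsum : ∑' x, S x = 0 := by
    have hmap := (qf v).map_tsum hTsum
    simp only [qf_apply] at hmap
    have h1 : (∑' z : ℕ, T z) = innerW W p p := rfl
    rw [hS, ← hmap, h1, hv0, dotProduct_zero]
  have hSpsd : ∀ x : ℕ, 0 ≤ S x := by
    intro x
    exact ((hW.posDef x).posSemidef.mul_mul_conjTranspose_same (matEval p x)).dotProduct_mulVec_nonneg v
  -- each term vanishes
  have hSzero : ∀ x : ℕ, S x = 0 := by
    have hre : Summable fun x => (S x).re :=
      hSsum.map Complex.reCLM Complex.reCLM.continuous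
    have hretsum : ∑' x, (S x).re = 0 := by
      have hmap := (Complex.reCLM.map_tsum hSsum).symm
      simp only [Complex.reCLM_apply] at hmap
      rw [hmap, hStsum, Complex.zero_re]
    intro x
    have h1 : (S x).re ≤ 0 := by
      calc (S x).re ≤ ∑' y, (S y).re :=
            Summable.le_tsum hre x fun j _ => (Complex.le_def.1 (hSpsd j)).1
        _ = 0 := hretsum
    have h2 : 0 ≤ (S x).re := (Complex.le_def.1 (hSpsd x)).1
    have him : (S x).im = 0 := ((Complex.le_def.1 (hSpsd x)).2).symm
    exact Complex.ext (le_antisymm h1 h2) him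
  -- hence the weighted vectors vanish
  have hw : ∀ x : ℕ, (matEval p x)ᴴ *ᵥ v = 0 := by
    intro x
    by_contra hwx
    have hpos := (hW.posDef x).dotProduct_mulVec_pos hwx
    have : S x = star ((matEval p x)ᴴ *ᵥ v) ⬝ᵥ W x *ᵥ ((matEval p x)ᴴ *ᵥ v) := by
      rw [hS]
      simp [hT, Matrix.dotProduct_mulVec, Matrix.star_mulVec, Matrix.vecMul_vecMul,
        Matrix.conjTranspose_conjTranspose, Matrix.mul_assoc]
    rw [hSzero x] at this
    rw [← this] at hpos
    exact lt_irrefl 0 hpos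
  -- polynomial argument: v = 0
  apply hv
  funext i
  set s : Polynomial ℂ := ∑ j : Fin N, C (star (v j)) * ep p j i with hsdef
  have hse : ∀ x : ℕ, s.eval (x : ℂ) = 0 := by
    intro x
    have h0 : ((matEval p x)ᴴ *ᵥ v) i = 0 := by rw [hw x]; rfl
    have : star (((matEval p x)ᴴ *ᵥ v) i) = 0 := by rw [h0, star_zero]
    rw [hsdef, Polynomial.eval_finset_sum]
    rw [← this]
    simp [Matrix.mulVec, dotProduct, Matrix.conjTranspose_apply, star_sum,
      star_mul', ep_eval, mul_comm]
  have hs0 : s = 0 := by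
    apply Polynomial.eq_zero_of_infinite_isRoot
    apply Set.Infinite.mono (s := Set.range (fun x : ℕ => (x : ℂ)))
    · rintro z ⟨x, rfl⟩
      exact hse x
    · exact Set.infinite_range_of_injective Nat.cast_injective
  have hcoeff : s.coeff p.natDegree = star (v i) := by
    rw [hsdef, Polynomial.finset_sum_coeff]
    have : ∀ j : Fin N, (C (star (v j)) * ep p j i).coeff p.natDegree
        = star (v j) * (1 : Mat N) j i := by
      intro j
      rw [Polynomial.coeff_C_mul, ep_coeff p j i _ le_rfl]
      congr 1
      have := hp.coeff_natDegree
      rw [this]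
    rw [Finset.sum_congr rfl fun j _ => this j]
    simp [Matrix.one_apply, Finset.sum_ite_eq]
  rw [hs0] at hcoeff
  simpa using congrArg star hcoeff.symm

variable {P : ℕ → Polynomial (Mat N)}

lemma coeff_self (hP : IsMOS W P) (n : ℕ) : (P n).coeff n = 1 := by
  have := (hP.monic n).coeff_natDegree
  rwa [hP.deg n] at this

lemma coeff_high (hP : IsMOS W P) {n m : ℕ} (h : n < m) : (P n).coeff m = 0 := by
  apply Polynomial.coeff_eq_zero_of_natDegree_lt
  rwa [hP.deg n]

/-- Expansion of a polynomial of degree at most `n` in the monic basis `P 0, …, P n`. -/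
lemma expand (hP : IsMOS W P) :
    ∀ n (p : Polynomial (Mat N)), p.natDegree ≤ n →
      ∃ A : ℕ → Mat N, p = ∑ k ∈ Finset.range (n+1), C (A k) * P k := by
  intro n
  induction n with
  | zero =>
    intro p hp
    refine ⟨fun _ => p.coeff 0, ?_⟩
    have h0 : P 0 = Polynomial.C 1 := by
      have h1 := Polynomial.eq_C_of_natDegree_eq_zero (hP.deg 0)
      rw [h1, coeff_self hP 0]
    rw [Finset.sum_range_one, h0, Polynomial.C_1, mul_one]
    exact Polynomial.eq_C_of_natDegree_le_zero hp
  | succ n ih =>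
    intro p hp
    set q := p - C (p.coeff (n+1)) * P (n+1) with hq
    have hqd : q.natDegree ≤ n := by
      rw [Polynomial.natDegree_le_iff_coeff_eq_zero]
      intro m hm
      rw [hq, Polynomial.coeff_sub, Polynomial.coeff_C_mul]
      rcases Nat.lt_or_ge (n+1) m with h | h
      · rw [Polynomial.coeff_eq_zero_of_natDegree_lt (lt_of_le_of_lt hp h),
          coeff_high hP h, mul_zero, sub_zero]
      · have hm1 : m = n + 1 := le_antisymm h hm
        rw [hm1, coeff_self hP (n+1), mul_one, sub_self]
    obtain ⟨A, hA⟩ := ih q hqd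
    refine ⟨fun k => if k = n + 1 then p.coeff (n+1) else A k, ?_⟩
    rw [Finset.sum_range_succ]
    simp only [eq_self_iff_true, if_true]
    have he : ∀ k ∈ Finset.range (n+1),
        C (if k = n + 1 then p.coeff (n+1) else A k) * P k = C (A k) * P k := by
      intro k hk
      rw [if_neg (by simp at hk; omega)]
    rw [Finset.sum_congr rfl he, ← hA, hq]
    abel


lemma orth_low (hW : IsWeight W) (hP : IsMOS W P) {p : Polynomial (Mat N)} {m k : ℕ}
    (hd : p.natDegree ≤ m) (hmk : m < k) : innerW W p (P k) = 0 := by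
  obtain ⟨A, hA⟩ := expand hP m p hd
  rw [hA, innerW_sum_left hW]
  refine Finset.sum_eq_zero fun j hj => ?_
  rw [innerW_C_mul_left hW, hP.orth j k (by simp at hj; omega), mul_zero]

lemma orth_low' (hW : IsWeight W) (hP : IsMOS W P) {p : Polynomial (Mat N)} {m k : ℕ}
    (hd : p.natDegree ≤ m) (hmk : m < k) : innerW W (P k) p = 0 := by
  rw [← innerW_conjTranspose hW, orth_low hW hP hd hmk, Matrix.conjTranspose_zero]

/-- Squared norm. -/
def Hm (W : ℤ → Mat N) (P : ℕ → Polynomial (Mat N)) (n : ℕ) : Mat N := innerW W (P n) (P n)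

lemma Hm_unit (hW : IsWeight W) (hP : IsMOS W P) (n : ℕ) : IsUnit (Hm W P n).det :=
  isUnit_det_inner hW _ (hP.monic n)

lemma Hm_herm (hW : IsWeight W) (n : ℕ) : (Hm W P n)ᴴ = Hm W P n :=
  innerW_conjTranspose hW _ _

lemma Hm_inv_herm (hW : IsWeight W) (n : ℕ) : ((Hm W P n)⁻¹)ᴴ = (Hm W P n)⁻¹ := by
  rw [Matrix.conjTranspose_nonsing_inv, Hm_herm hW]

lemma zero_of_orth (hW : IsWeight W) (hP : IsMOS W P) {p : Polynomial (Mat N)} {n : ℕ}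
    (hd : p.natDegree ≤ n) (h : ∀ k ≤ n, innerW W p (P k) = 0) : p = 0 := by
  obtain ⟨A, hA⟩ := expand hP n p hd
  have hAz : ∀ k, k ≤ n → A k = 0 := by
    intro k hk
    have h0 := h k hk
    rw [hA, innerW_sum_left hW] at h0
    have hsingle : ∑ j ∈ Finset.range (n+1), innerW W (C (A j) * P j) (P k)
        = A k * Hm W P k := by
      rw [Finset.sum_eq_single k]
      · rw [innerW_C_mul_left hW]; rfl
      · intro j _ hjk
        rw [innerW_C_mul_left hW, hP.orth j k hjk, mul_zero]
      · intro hk'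
        exact absurd (Finset.mem_range.2 (Nat.lt_succ_of_le hk)) hk'
    rw [hsingle] at h0
    have := congrArg (fun M => M * (Hm W P k)⁻¹) h0
    simpa [mul_assoc, Matrix.mul_nonsing_inv _ (Hm_unit hW hP k)] using this
  rw [hA]
  refine Finset.sum_eq_zero fun j hj => ?_
  rw [hAz j (by simp at hj; omega), map_zero, zero_mul]

lemma deg_X_mul_le (hP : IsMOS W P) (k : ℕ) : (X * P k).natDegree ≤ k + 1 := by
  rw [Polynomial.natDegree_le_iff_coeff_eq_zero]
  intro m hm
  obtain ⟨l, rfl⟩ : ∃ l, m = l + 1 := ⟨m - 1, by omega⟩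
  rw [Polynomial.coeff_X_mul]
  exact coeff_high hP (by omega)

lemma deg_s_le (hP : IsMOS W P) (n : ℕ) : (X * P n - P (n+1)).natDegree ≤ n := by
  rw [Polynomial.natDegree_le_iff_coeff_eq_zero]
  intro m hm
  obtain ⟨l, rfl⟩ : ∃ l, m = l + 1 := ⟨m - 1, by omega⟩
  rw [Polynomial.coeff_sub, Polynomial.coeff_X_mul]
  rcases eq_or_lt_of_le (by omega : n ≤ l) with rfl | h
  · rw [coeff_self hP, coeff_self hP, sub_self]
  · rw [coeff_high hP (by omega), coeff_high hP (by omega), sub_self]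

lemma inner_X_P_high (hW : IsWeight W) (hP : IsMOS W P) {k m : ℕ} (h : k + 1 < m) :
    innerW W (X * P m) (P k) = 0 := by
  rw [innerW_X_mul hW, ← innerW_conjTranspose hW,
    orth_low hW hP (deg_X_mul_le hP k) h, Matrix.conjTranspose_zero]

lemma inner_X_P_next (hW : IsWeight W) (hP : IsMOS W P) (n : ℕ) :
    innerW W (X * P (n+1)) (P n) = Hm W P (n+1) := by
  rw [innerW_X_mul hW]
  have hsplit : X * P n = P (n+1) + (X * P n - P (n+1)) := by abel
  rw [hsplit, innerW_add_right hW, ← innerW_conjTranspose hW (X * P n - P (n+1)),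
    orth_low hW hP (deg_s_le hP n) (Nat.lt_succ_self n), Matrix.conjTranspose_zero]
  rw [add_zero]; rfl

/-- Recurrence coefficient `B`. -/
def Bm (W : ℤ → Mat N) (P : ℕ → Polynomial (Mat N)) (n : ℕ) : Mat N :=
  innerW W (X * P n) (P n) * (Hm W P n)⁻¹

lemma Bm_comm (hW : IsWeight W) (hP : IsMOS W P) (n : ℕ) :
    (Hm W P n)⁻¹ * Bm W P n = (Bm W P n)ᴴ * (Hm W P n)⁻¹ := by
  have hSh : (innerW W (X * P n) (P n))ᴴ = innerW W (X * P n) (P n) := by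
    rw [innerW_conjTranspose hW, ← innerW_X_mul hW]
  rw [Bm, Matrix.conjTranspose_mul, Hm_inv_herm hW, hSh, mul_assoc]

/-- Three-term recurrence, base case. -/
lemma ttr0 (hW : IsWeight W) (hP : IsMOS W P) :
    X * P 0 = P 1 + C (Bm W P 0) * P 0 := by
  have key : X * P 0 - (P 1 + C (Bm W P 0) * P 0) = 0 := by
    apply zero_of_orth hW hP (n := 0)
    · rw [Polynomial.natDegree_le_iff_coeff_eq_zero]
      intro m hm
      obtain ⟨l, rfl⟩ : ∃ l, m = l + 1 := ⟨m - 1, by omega⟩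
      rw [Polynomial.coeff_sub, Polynomial.coeff_X_mul, Polynomial.coeff_add,
        Polynomial.coeff_C_mul]
      rcases Nat.eq_zero_or_pos l with rfl | hl
      · rw [coeff_self hP, coeff_self hP, coeff_high hP (by omega), mul_zero, add_zero,
          sub_self]
      · rw [coeff_high hP (by omega), coeff_high hP (by omega), coeff_high hP (by omega),
          mul_zero, add_zero, sub_zero]
    · intro k hk
      interval_cases k
      rw [innerW_sub_left hW, innerW_add_left hW, innerW_C_mul_left hW]
      rw [hP.orth 1 0 (by omega)]
      show innerW W (X * P 0) (P 0) - (0 + Bm W P 0 * Hm W P 0) = 0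
      rw [Bm, mul_assoc, Matrix.nonsing_inv_mul _ (Hm_unit hW hP 0), mul_one, zero_add,
        sub_self]
  exact sub_eq_zero.mp key


/-- Three-term recurrence, inductive case. -/
lemma ttrS (hW : IsWeight W) (hP : IsMOS W P) (n : ℕ) :
    X * P (n+1) = P (n+2) + C (Bm W P (n+1)) * P (n+1)
      + C (Hm W P (n+1) * (Hm W P n)⁻¹) * P n := by
  have key : X * P (n+1) - (P (n+2) + C (Bm W P (n+1)) * P (n+1)
      + C (Hm W P (n+1) * (Hm W P n)⁻¹) * P n) = 0 := by
    apply zero_of_orth hW hP (n := n+1)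
    · rw [Polynomial.natDegree_le_iff_coeff_eq_zero]
      intro m hm
      obtain ⟨l, rfl⟩ : ∃ l, m = l + 1 := ⟨m - 1, by omega⟩
      rw [Polynomial.coeff_sub, Polynomial.coeff_X_mul, Polynomial.coeff_add,
        Polynomial.coeff_add, Polynomial.coeff_C_mul, Polynomial.coeff_C_mul]
      rcases eq_or_lt_of_le (by omega : n + 1 ≤ l) with rfl | h
      · have e1 : (P (n+1)).coeff (n+1) = 1 := coeff_self hP (n+1)
        have e2 : (P (n+2)).coeff (n+1+1) = 1 := coeff_self hP (n+2)
        have e3 : (P (n+1)).coeff (n+1+1) = 0 := coeff_high hP (by omega)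
        have e4 : (P n).coeff (n+1+1) = 0 := coeff_high hP (by omega)
        rw [e1, e2, e3, e4, mul_zero, mul_zero, add_zero, add_zero, sub_self]
      · rw [coeff_high hP (by omega), coeff_high hP (by omega), coeff_high hP (by omega),
          coeff_high hP (by omega), mul_zero, mul_zero, add_zero, add_zero, sub_zero]
    · intro k hk
      rw [innerW_sub_left hW, innerW_add_left hW, innerW_add_left hW,
        innerW_C_mul_left hW, innerW_C_mul_left hW]
      by_cases h1 : k = n + 1
      · subst h1
        rw [hP.orth (n+2) (n+1) (by omega), hP.orth n (n+1) (by omega), mul_zero, add_zero,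
          zero_add]
        show innerW W (X * P (n+1)) (P (n+1)) - Bm W P (n+1) * Hm W P (n+1) = 0
        rw [Bm, mul_assoc, Matrix.nonsing_inv_mul _ (Hm_unit hW hP (n+1)), mul_one, sub_self]
      · by_cases h2 : k = n
        · rw [h2]
          rw [inner_X_P_next hW hP n, hP.orth (n+2) n (by omega), hP.orth (n+1) n (by omega),
            mul_zero, add_zero, zero_add]
          show Hm W P (n+1) - Hm W P (n+1) * (Hm W P n)⁻¹ * Hm W P n = 0
          rw [mul_assoc, Matrix.nonsing_inv_mul _ (Hm_unit hW hP n), mul_one, sub_self]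
        · rw [inner_X_P_high hW hP (by omega), hP.orth (n+2) k (by omega),
            hP.orth (n+1) k (by omega), hP.orth n k (by omega), mul_zero, mul_zero,
            add_zero, add_zero, sub_self]
  exact sub_eq_zero.mp key

lemma cd_step0 {A : Type*} [Ring A] [Module ℂ A] [SMulCommClass ℂ A A] [IsScalarTower ℂ A A]
    (x y : ℂ) (ex0 ex1 ey0 ey1 B B' Hi : A)
    (hy : y • ey0 = ey1 + B * ey0)
    (hx : x • ex0 = ex1 + ex0 * B')
    (hB : Hi * B = B' * Hi) :
    (y - x) • (ex0 * Hi * ey0) = ex0 * Hi * ey1 - ex1 * Hi * ey0 := by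
  have h1 : (y - x) • (ex0 * Hi * ey0)
      = ex0 * Hi * (y • ey0) - (x • ex0) * Hi * ey0 := by
    rw [sub_smul, mul_smul_comm, smul_mul_assoc, smul_mul_assoc]
  rw [h1, hy, hx]
  have h2 : ex0 * Hi * (B * ey0) = ex0 * B' * (Hi * ey0) := by
    rw [← mul_assoc, mul_assoc ex0 Hi B, hB, ← mul_assoc, mul_assoc]
  rw [mul_add, h2]
  noncomm_ring

lemma cd_stepS {A : Type*} [Ring A] [Module ℂ A] [SMulCommClass ℂ A A] [IsScalarTower ℂ A A]
    (x y : ℂ) (ex0 ex1 ex2 ey0 ey1 ey2 B B' Cm Cm' Hi Hj : A)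
    (hy : y • ey1 = ey2 + B * ey1 + Cm * ey0)
    (hx : x • ex1 = ex2 + ex1 * B' + ex0 * Cm')
    (hB : Hi * B = B' * Hi)
    (hC : Hi * Cm = Hj)
    (hC' : Cm' * Hi = Hj) :
    (y - x) • (ex1 * Hi * ey1)
      = (ex1 * Hi * ey2 - ex2 * Hi * ey1) - (ex0 * Hj * ey1 - ex1 * Hj * ey0) := by
  have h1 : (y - x) • (ex1 * Hi * ey1)
      = ex1 * Hi * (y • ey1) - (x • ex1) * Hi * ey1 := by
    rw [sub_smul, mul_smul_comm, smul_mul_assoc, smul_mul_assoc]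
  rw [h1, hy, hx]
  have h2 : ex1 * Hi * (B * ey1) = ex1 * B' * (Hi * ey1) := by
    rw [← mul_assoc, mul_assoc ex1 Hi B, hB, ← mul_assoc, mul_assoc]
  have h3 : ex1 * Hi * (Cm * ey0) = ex1 * (Hj * ey0) := by
    rw [← mul_assoc, mul_assoc ex1 Hi Cm, hC, mul_assoc]
  have h4 : ex0 * Cm' * (Hi * ey1) = ex0 * (Hj * ey1) := by
    rw [← mul_assoc, mul_assoc ex0 Cm' Hi, hC', mul_assoc]
  rw [mul_add, mul_add, h2, h3]
  have h5 : (ex2 + ex1 * B' + ex0 * Cm') * Hi * ey1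
      = ex2 * Hi * ey1 + ex1 * B' * (Hi * ey1) + ex0 * Cm' * (Hi * ey1) := by
    noncomm_ring
  rw [h5, h4]
  noncomm_ring

lemma eval_ttr0_y (hW : IsWeight W) (hP : IsMOS W P) (y : ℂ) :
    y • matEval (P 0) y = matEval (P 1) y + Bm W P 0 * matEval (P 0) y := by
  have := congrArg (fun p => matEval p y) (ttr0 hW hP)
  simpa [matEval_X_mul, matEval_add, matEval_C_mul] using this

lemma eval_ttrS_y (hW : IsWeight W) (hP : IsMOS W P) (n : ℕ) (y : ℂ) :
    y • matEval (P (n+1)) y = matEval (P (n+2)) y + Bm W P (n+1) * matEval (P (n+1)) y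
      + (Hm W P (n+1) * (Hm W P n)⁻¹) * matEval (P n) y := by
  have := congrArg (fun p => matEval p y) (ttrS hW hP n)
  simpa [matEval_X_mul, matEval_add, matEval_C_mul, mul_assoc] using this

lemma eval_ttr0_x (hW : IsWeight W) (hP : IsMOS W P) (x : ℕ) :
    (x : ℂ) • (matEval (P 0) x)ᴴ
      = (matEval (P 1) x)ᴴ + (matEval (P 0) x)ᴴ * (Bm W P 0)ᴴ := by
  have := congrArg conjTranspose (eval_ttr0_y hW hP (x : ℂ))
  simpa [Matrix.conjTranspose_smul, star_natCast, Matrix.conjTranspose_add,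
    Matrix.conjTranspose_mul] using this

lemma eval_ttrS_x (hW : IsWeight W) (hP : IsMOS W P) (n : ℕ) (x : ℕ) :
    (x : ℂ) • (matEval (P (n+1)) x)ᴴ
      = (matEval (P (n+2)) x)ᴴ + (matEval (P (n+1)) x)ᴴ * (Bm W P (n+1))ᴴ
        + (matEval (P n) x)ᴴ * (Hm W P (n+1) * (Hm W P n)⁻¹)ᴴ := by
  have := congrArg conjTranspose (eval_ttrS_y hW hP n (x : ℂ))
  simpa [Matrix.conjTranspose_smul, star_natCast, Matrix.conjTranspose_add,
    Matrix.conjTranspose_mul, add_assoc] using this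

lemma cd_sum (hW : IsWeight W) (hP : IsMOS W P) (x y M : ℕ) :
    ∑ n ∈ Finset.range (M+1),
      ((y:ℂ) - (x:ℂ)) • ((matEval (P n) x)ᴴ * (Hm W P n)⁻¹ * matEval (P n) y)
    = (matEval (P M) x)ᴴ * (Hm W P M)⁻¹ * matEval (P (M+1)) y
      - (matEval (P (M+1)) x)ᴴ * (Hm W P M)⁻¹ * matEval (P M) y := by
  induction M with
  | zero =>
    rw [Finset.sum_range_one]
    exact cd_step0 (x:ℂ) (y:ℂ) _ _ _ _ _ _ _ (eval_ttr0_y hW hP y) (eval_ttr0_x hW hP x)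
      (Bm_comm hW hP 0)
  | succ M ih =>
    rw [Finset.sum_range_succ, ih]
    have hC : (Hm W P (M+1))⁻¹ * (Hm W P (M+1) * (Hm W P M)⁻¹) = (Hm W P M)⁻¹ := by
      rw [← mul_assoc, Matrix.nonsing_inv_mul _ (Hm_unit hW hP (M+1)), one_mul]
    have hC' : (Hm W P (M+1) * (Hm W P M)⁻¹)ᴴ * (Hm W P (M+1))⁻¹ = (Hm W P M)⁻¹ := by
      rw [Matrix.conjTranspose_mul, Hm_inv_herm hW, Hm_herm hW, mul_assoc,
        Matrix.mul_nonsing_inv _ (Hm_unit hW hP (M+1)), mul_one]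
    have := cd_stepS (x:ℂ) (y:ℂ)
      ((matEval (P M) x)ᴴ) ((matEval (P (M+1)) x)ᴴ) ((matEval (P (M+2)) x)ᴴ)
      (matEval (P M) y) (matEval (P (M+1)) y) (matEval (P (M+2)) y)
      (Bm W P (M+1)) ((Bm W P (M+1))ᴴ)
      (Hm W P (M+1) * (Hm W P M)⁻¹) ((Hm W P (M+1) * (Hm W P M)⁻¹)ᴴ)
      ((Hm W P (M+1))⁻¹) ((Hm W P M)⁻¹)
      (eval_ttrS_y hW hP M y) (eval_ttrS_x hW hP M x)
      (Bm_comm hW hP (M+1)) hC hC'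
    rw [this]
    abel

end DO

/-- dual orthogonality relations for a dual family of a monic matrix
orthogonal polynomial sequence. -/
theorem dual_orthogonality {N : ℕ} (W : ℤ → Mat N) (hW : IsWeight W)
    (P : ℕ → Polynomial (Mat N)) (hP : IsMOS W P)
    (H : ℕ → Mat N) (hH : ∀ n, H n = innerW W (P n) (P n))
    (hP0 : ∀ n, IsUnit (matEval (P n) 0))
    (Q : ℕ → Polynomial (Mat N))
    (hQm : ∀ x, (Q x).Monic) (hQd : ∀ x, (Q x).natDegree = x)
    (ρ : ℕ → Mat N) (Υ : ℕ → Mat N) (hΥ : ∀ x, IsUnit (Υ x))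
    (hdual : ∀ n x : ℕ, matEval (P n) (x : ℂ)
      = matEval (P n) 0 * leftEval (Q x) (ρ n) * Υ x)
    (U : ℕ → Mat N)
    (hU : ∀ n, U n = (matEval (P n) 0)ᴴ * (H n)⁻¹ * matEval (P n) 0)
    (hsum : ∀ x y : ℕ, ∀ i k : Fin N, Summable fun n : ℕ =>
      ‖((leftEval (Q x) (ρ n))ᴴ * U n * leftEval (Q y) (ρ n)) i k‖)
    (hlim1 : ∀ x y : ℕ, Filter.Tendsto (fun n : ℕ =>
        (leftEval (Q x) (ρ (n + 1)))ᴴ * (matEval (P (n + 1)) 0)ᴴ * (H n)⁻¹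
          * matEval (P n) 0 * leftEval (Q y) (ρ n))
      Filter.atTop (nhds 0))
    (hlim2 : ∀ x y : ℕ, Filter.Tendsto (fun n : ℕ =>
        (leftEval (Q x) (ρ n))ᴴ * (matEval (P n) 0)ᴴ * (H n)⁻¹
          * matEval (P (n + 1)) 0 * leftEval (Q y) (ρ (n + 1)))
      Filter.atTop (nhds 0)) :
    ∀ x y : ℕ, x ≠ y →
      (∑' n : ℕ, (leftEval (Q x) (ρ n))ᴴ * U n * leftEval (Q y) (ρ n)) = 0 := by
  intro x y hxy
  classical
  set f : ℕ → Mat N := fun n => (leftEval (Q x) (ρ n))ᴴ * U n * leftEval (Q y) (ρ n) with hf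
  have hfsum : Summable f := by
    exact Pi.summable.2 fun i => Pi.summable.2 fun k => Summable.of_norm (hsum x y i k)
  have hH' : ∀ n, H n = DO.Hm W P n := hH
  set K : ℕ → Mat N := fun n => (matEval (P n) x)ᴴ * (H n)⁻¹ * matEval (P n) y with hK
  have hKf : ∀ n, K n = (Υ x)ᴴ * f n * Υ y := by
    intro n
    show (matEval (P n) x)ᴴ * (H n)⁻¹ * matEval (P n) y
      = (Υ x)ᴴ * ((leftEval (Q x) (ρ n))ᴴ * U n * leftEval (Q y) (ρ n)) * Υ y
    rw [hdual n x, hdual n y, hU n]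
    simp [Matrix.conjTranspose_mul, Matrix.mul_assoc]
  have hKe : K = fun n => DO.lmul (Υ x)ᴴ (DO.rmul (Υ y) (f n)) := by
    funext n; rw [hKf n]; simp [Matrix.mul_assoc]
  have hfsum' : Summable fun n => DO.rmul (Υ y) (f n) :=
    (hfsum.map (DO.rmul (Υ y)) (DO.rmul (Υ y)).continuous)
  have hKsum : Summable K := by
    rw [hKe]
    exact hfsum'.map (DO.lmul (Υ x)ᴴ) (DO.lmul (Υ x)ᴴ).continuous
  have htsumK : ∑' n, K n = (Υ x)ᴴ * (∑' n, f n) * Υ y := by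
    calc (∑' n, K n) = ∑' n, DO.lmul (Υ x)ᴴ (DO.rmul (Υ y) (f n)) := by rw [hKe]
      _ = DO.lmul (Υ x)ᴴ (∑' n, DO.rmul (Υ y) (f n)) :=
          ((DO.lmul (Υ x)ᴴ).map_tsum hfsum').symm
      _ = DO.lmul (Υ x)ᴴ (DO.rmul (Υ y) (∑' n, f n)) := by
          rw [(DO.rmul (Υ y)).map_tsum hfsum]
      _ = (Υ x)ᴴ * (∑' n, f n) * Υ y := by simp [Matrix.mul_assoc]
  have hps : ∀ M : ℕ, ∑ n ∈ Finset.range (M+1), ((y:ℂ) - (x:ℂ)) • K n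
      = (matEval (P M) x)ᴴ * (H M)⁻¹ * matEval (P (M+1)) y
        - (matEval (P (M+1)) x)ᴴ * (H M)⁻¹ * matEval (P M) y := by
    intro M
    have := DO.cd_sum hW hP x y M
    simp only [← hH'] at this
    exact this
  have hA : ∀ M : ℕ, (matEval (P M) x)ᴴ * (H M)⁻¹ * matEval (P (M+1)) y
      = (Υ x)ᴴ * ((leftEval (Q x) (ρ M))ᴴ * (matEval (P M) 0)ᴴ * (H M)⁻¹
          * matEval (P (M+1)) 0 * leftEval (Q y) (ρ (M+1))) * Υ y := by
    intro M
    rw [hdual M x, hdual (M+1) y]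
    simp [Matrix.conjTranspose_mul, Matrix.mul_assoc]
  have hB : ∀ M : ℕ, (matEval (P (M+1)) x)ᴴ * (H M)⁻¹ * matEval (P M) y
      = (Υ x)ᴴ * ((leftEval (Q x) (ρ (M+1)))ᴴ * (matEval (P (M+1)) 0)ᴴ * (H M)⁻¹
          * matEval (P M) 0 * leftEval (Q y) (ρ M)) * Υ y := by
    intro M
    rw [hdual (M+1) x, hdual M y]
    simp [Matrix.conjTranspose_mul, Matrix.mul_assoc]
  have hglim : Tendsto (fun M : ℕ => (matEval (P M) x)ᴴ * (H M)⁻¹ * matEval (P (M+1)) y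
      - (matEval (P (M+1)) x)ᴴ * (H M)⁻¹ * matEval (P M) y) atTop (nhds (0 : Mat N)) := by
    have t1 : Tendsto (fun M : ℕ => (matEval (P M) x)ᴴ * (H M)⁻¹ * matEval (P (M+1)) y)
        atTop (nhds (0 : Mat N)) := by
      have := (tendsto_const_nhds (x := (Υ x)ᴴ) (f := atTop (α := ℕ))).mul
        ((hlim2 x y).mul (tendsto_const_nhds (x := Υ y)))
      simp only [mul_zero, zero_mul] at this
      refine this.congr fun M => ?_
      rw [hA M]
      simp [Matrix.mul_assoc]
    have t2 : Tendsto (fun M : ℕ => (matEval (P (M+1)) x)ᴴ * (H M)⁻¹ * matEval (P M) y)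
        atTop (nhds (0 : Mat N)) := by
      have := (tendsto_const_nhds (x := (Υ x)ᴴ) (f := atTop (α := ℕ))).mul
        ((hlim1 x y).mul (tendsto_const_nhds (x := Υ y)))
      simp only [mul_zero, zero_mul] at this
      refine this.congr fun M => ?_
      rw [hB M]
      simp [Matrix.mul_assoc]
    simpa using t1.sub t2
  have hKlim : Tendsto (fun M : ℕ => ∑ n ∈ Finset.range (M+1), ((y:ℂ) - (x:ℂ)) • K n)
      atTop (nhds (0 : Mat N)) := by
    rw [funext hps]
    exact hglim
  have hhs : HasSum (fun n => ((y:ℂ) - (x:ℂ)) • K n) (((y:ℂ) - (x:ℂ)) • ∑' n, K n) :=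
    hKsum.hasSum.const_smul _
  have h3 : Tendsto (fun M : ℕ => ∑ n ∈ Finset.range (M+1), ((y:ℂ) - (x:ℂ)) • K n) atTop
      (nhds (((y:ℂ) - (x:ℂ)) • ∑' n, K n)) :=
    hhs.tendsto_sum_nat.comp (tendsto_add_atTop_nat 1)
  have h4 : ((y:ℂ) - (x:ℂ)) • ∑' n, K n = 0 := tendsto_nhds_unique h3 hKlim
  have hyx : (y:ℂ) - (x:ℂ) ≠ 0 := by
    rw [sub_ne_zero]
    exact fun h => hxy (Nat.cast_injective h).symm
  have hK0 : ∑' n, K n = 0 := by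
    rcases smul_eq_zero.mp h4 with h | h
    · exact absurd h hyx
    · exact h
  rw [htsumK] at hK0
  have hux : IsUnit ((Υ x)ᴴ).det := by
    rw [Matrix.det_conjTranspose]
    exact ((Matrix.isUnit_iff_isUnit_det _).1 (hΥ x)).star
  have huy : IsUnit (Υ y).det := (Matrix.isUnit_iff_isUnit_det _).1 (hΥ y)
  have := congrArg (fun M => ((Υ x)ᴴ)⁻¹ * M * (Υ y)⁻¹) hK0
  simp only [mul_zero, zero_mul] at this
  rw [show ((Υ x)ᴴ)⁻¹ * ((Υ x)ᴴ * (∑' n, f n) * Υ y) * (Υ y)⁻¹ = ∑' n, f n by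
    rw [Matrix.mul_assoc ((Υ x)ᴴ), Matrix.nonsing_inv_mul_cancel_left _ _ hux,
      Matrix.mul_nonsing_inv_cancel_right _ _ huy]] at this
  exact this
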